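/- Every strictly 2-balanced graph H is 2-connected. -/

import Mathlib

set_option linter.unusedSectionVars false
set_option maxHeartbeats 1000000

def Strictly2Balanced {V : Type*} [Fintype V] (H : SimpleGraph V) : Prop :=
  3 ≤ Fintype.card V ∧ 3 ≤ H.edgeSet.ncard ∧
  ∀ K : H.Subgraph, K ≠ ⊤ → 3 ≤ K.verts.ncard →
    ((H.edgeSet.ncard : ℝ) - 1) / ((Fintype.card V : ℝ) - 2) >
      ((K.edgeSet.ncard : ℝ) - 1) / ((K.verts.ncard : ℝ) - 2)

open SimpleGraph Set

section Aux

variable {V : Type*} [Fintype V] {H : SimpleGraph V}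

lemma exists_rep {e : Sym2 V} (he : e ∈ H.edgeSet) :
    ∃ x y, e = s(x, y) ∧ H.Adj x y := by
  induction e using Sym2.ind with
  | _ x y => exact ⟨x, y, rfl, he⟩

lemma ncard_univ_V : (Set.univ : Set V).ncard = Fintype.card V := by
  rw [Set.ncard_univ, Nat.card_eq_fintype_card]

/-- disjointness of endpoints of distinct edges in a matching -/
lemma matching_disj (hmatch : ∀ ⦃x y z : V⦄, H.Adj x y → H.Adj y z → x = z)
    {a b c d : V} (hab : H.Adj a b) (hcd : H.Adj c d) (hne : s(a, b) ≠ s(c, d)) :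
    a ≠ c ∧ a ≠ d ∧ b ≠ c ∧ b ≠ d := by
  refine ⟨fun h => ?_, fun h => ?_, fun h => ?_, fun h => ?_⟩
  · subst h
    exact hne (Sym2.eq_iff.mpr (Or.inl ⟨rfl, hmatch hab.symm hcd⟩))
  · subst h
    exact hne (Sym2.eq_iff.mpr (Or.inr ⟨rfl, hmatch hab.symm hcd.symm⟩))
  · subst h
    exact hne (Sym2.eq_iff.mpr (Or.inr ⟨hmatch hab hcd, rfl⟩))
  · subst h
    exact hne (Sym2.eq_iff.mpr (Or.inl ⟨hmatch hab hcd.symm, rfl⟩))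

lemma mge (h2b : Strictly2Balanced H) (hn : 4 ≤ Fintype.card V) :
    Fintype.card V ≤ H.edgeSet.ncard := by
  obtain ⟨-, hm3, hK⟩ := h2b
  set n := Fintype.card V with hn_def
  set m := H.edgeSet.ncard with hm_def
  by_cases hP : ∃ a b c, a ≠ c ∧ H.Adj a b ∧ H.Adj b c
  · obtain ⟨a, b, c, hac, hab, hbc⟩ := hP
    set K : H.Subgraph := H.subgraphOfAdj hab ⊔ H.subgraphOfAdj hbc with hK_def
    have hverts : K.verts = {a, b, c} := by
      rw [hK_def, SimpleGraph.Subgraph.verts_sup, subgraphOfAdj_verts, subgraphOfAdj_verts]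
      ext x; simp; tauto
    have hv3 : K.verts.ncard = 3 := by
      rw [hverts]
      rw [Set.ncard_insert_of_notMem (by simp [hab.ne, hac]),
        Set.ncard_insert_of_notMem (by simp [hbc.ne]), Set.ncard_singleton]
    have he2 : K.edgeSet.ncard = 2 := by
      rw [hK_def, SimpleGraph.Subgraph.edgeSet_sup, SimpleGraph.edgeSet_subgraphOfAdj,
        SimpleGraph.edgeSet_subgraphOfAdj]
      rw [Set.singleton_union]
      refine Set.ncard_pair fun h => ?_
      rcases Sym2.eq_iff.mp h with ⟨h1, h2⟩ | ⟨h1, h2⟩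
      · exact hab.ne h1
      · exact hac h1
    have hKne : K ≠ ⊤ := by
      intro h
      have := congrArg (fun K : H.Subgraph => K.verts.ncard) h
      simp only [SimpleGraph.Subgraph.verts_top, ncard_univ_V, hv3] at this
      omega
    have hA := hK K hKne (by omega)
    rw [hv3, he2] at hA
    have hn2 : (0 : ℝ) < (n : ℝ) - 2 := by
      have : (4 : ℝ) ≤ n := by exact_mod_cast hn
      linarith
    rw [gt_iff_lt, div_lt_div_iff₀ (by norm_num) hn2] at hA
    have h2 : (n : ℝ) < (m : ℝ) + 1 := by push_cast at hA; linarith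
    have h3 : n < m + 1 := by exact_mod_cast h2
    omega
  · push_neg at hP
    have hmatch : ∀ ⦃x y z : V⦄, H.Adj x y → H.Adj y z → x = z := by
      intro x y z h1 h2
      by_contra hne
      exact hP x y z hne h1 h2
    exfalso
    obtain ⟨e1, he1, e2, he2, e3, he3, h12, h13, h23⟩ :=
      (Set.two_lt_ncard (Set.toFinite H.edgeSet)).mp (by omega)
    obtain ⟨a, b, rfl, hab⟩ := exists_rep he1
    obtain ⟨c, d, rfl, hcd⟩ := exists_rep he2
    obtain ⟨p, q, rfl, hpq⟩ := exists_rep he3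
    obtain ⟨hac, had, hbc, hbd⟩ := matching_disj hmatch hab hcd h12
    obtain ⟨hap, haq, hbp, hbq⟩ := matching_disj hmatch hab hpq h13
    obtain ⟨hcp, hcq, hdp, hdq⟩ := matching_disj hmatch hcd hpq h23
    -- n ≥ 5
    have hn5 : 5 ≤ n := by
      have hsub : ({a, b, c, d, p} : Set V) ⊆ Set.univ := Set.subset_univ _
      have h5 : ({a, b, c, d, p} : Set V).ncard = 5 := by
        rw [Set.ncard_insert_of_notMem (by simp [hab.ne, hac, had, hap]),
          Set.ncard_insert_of_notMem (by simp [hbc, hbd, hbp]),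
          Set.ncard_insert_of_notMem (by simp [hcd.ne, hcp]),
          Set.ncard_insert_of_notMem (by simp [hdp]), Set.ncard_singleton]
      have := Set.ncard_le_ncard hsub (Set.toFinite _)
      rw [h5, ncard_univ_V] at this
      exact this
    -- first subgraph: two disjoint edges
    set K1 : H.Subgraph := H.subgraphOfAdj hab ⊔ H.subgraphOfAdj hcd with hK1_def
    have hv1 : K1.verts.ncard = 4 := by
      rw [hK1_def, SimpleGraph.Subgraph.verts_sup, subgraphOfAdj_verts, subgraphOfAdj_verts]
      rw [show ({a, b} ∪ {c, d} : Set V) = {a, b, c, d} by ext x; simp; tauto]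
      rw [Set.ncard_insert_of_notMem (by simp [hab.ne, hac, had]),
        Set.ncard_insert_of_notMem (by simp [hbc, hbd]),
        Set.ncard_insert_of_notMem (by simp [hcd.ne]), Set.ncard_singleton]
    have he1' : K1.edgeSet.ncard = 2 := by
      rw [hK1_def, SimpleGraph.Subgraph.edgeSet_sup, SimpleGraph.edgeSet_subgraphOfAdj,
        SimpleGraph.edgeSet_subgraphOfAdj, Set.singleton_union]
      exact Set.ncard_pair h12
    have hK1ne : K1 ≠ ⊤ := by
      intro h
      have := congrArg (fun K : H.Subgraph => K.edgeSet.ncard) h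
      simp only [SimpleGraph.Subgraph.edgeSet_top, he1'] at this
      omega
    have hA := hK K1 hK1ne (by omega)
    rw [hv1, he1'] at hA
    -- second subgraph: delete a, b
    set K2 : H.Subgraph := (⊤ : H.Subgraph).induce ({a, b}ᶜ) with hK2_def
    have hv2 : K2.verts.ncard = n - 2 := by
      rw [hK2_def, SimpleGraph.Subgraph.induce_verts, Set.compl_eq_univ_diff,
        Set.ncard_diff (Set.subset_univ _), ncard_univ_V, Set.ncard_pair hab.ne]
    have he2' : K2.edgeSet = H.edgeSet \ {s(a, b)} := by
      ext e
      constructor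
      · intro he
        obtain ⟨x, y, rfl, hxy⟩ := exists_rep (K2.edgeSet_subset he)
        rw [hK2_def, SimpleGraph.Subgraph.mem_edgeSet, SimpleGraph.Subgraph.induce_adj] at he
        obtain ⟨hx, hy, -⟩ := he
        refine ⟨hxy, ?_⟩
        simp only [Set.mem_singleton_iff, Sym2.eq_iff]
        push_neg
        simp only [Set.mem_compl_iff, Set.mem_insert_iff, Set.mem_singleton_iff] at hx
        push_neg at hx
        exact ⟨fun h => absurd h hx.1, fun h _ => absurd h hx.2⟩
      · rintro ⟨he, hne⟩
        obtain ⟨x, y, rfl, hxy⟩ := exists_rep he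
        simp only [Set.mem_singleton_iff] at hne
        have hx : x ∉ ({a, b} : Set V) := by
          simp only [Set.mem_insert_iff, Set.mem_singleton_iff]
          push_neg
          constructor
          · rintro rfl
            exact hne (by rw [hmatch hxy.symm hab])
          · rintro rfl
            exact hne (by rw [hmatch hxy.symm hab.symm, Sym2.eq_swap])
        have hy : y ∉ ({a, b} : Set V) := by
          simp only [Set.mem_insert_iff, Set.mem_singleton_iff]
          push_neg
          constructor
          · rintro rfl
            exact hne (Sym2.eq_iff.mpr (Or.inr ⟨hmatch hxy hab, rfl⟩))
          · rintro rfl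
            exact hne (Sym2.eq_iff.mpr (Or.inl ⟨hmatch hxy hab.symm, rfl⟩))
        rw [hK2_def, SimpleGraph.Subgraph.mem_edgeSet, SimpleGraph.Subgraph.induce_adj]
        exact ⟨hx, hy, SimpleGraph.Subgraph.top_adj.mpr hxy⟩
    have he2c : K2.edgeSet.ncard = m - 1 := by
      rw [he2', Set.ncard_diff_singleton_of_mem he1]
    have hK2ne : K2 ≠ ⊤ := by
      intro h
      have := congrArg SimpleGraph.Subgraph.verts h
      rw [hK2_def, SimpleGraph.Subgraph.induce_verts, SimpleGraph.Subgraph.verts_top] at this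
      have ha : a ∈ ({a, b}ᶜ : Set V) := this ▸ Set.mem_univ a
      simp at ha
    have hB := hK K2 hK2ne (by omega)
    rw [hv2, he2c] at hB
    -- arithmetic
    have hmr : (3 : ℝ) ≤ (m : ℝ) := by exact_mod_cast hm3
    have hnr : (5 : ℝ) ≤ (n : ℝ) := by exact_mod_cast hn5
    have hcast1 : ((m - 1 : ℕ) : ℝ) = (m : ℝ) - 1 := by
      have : 1 ≤ m := by omega
      push_cast [this]; ring
    have hcast2 : ((n - 2 : ℕ) : ℝ) = (n : ℝ) - 2 := by
      have : 2 ≤ n := by omega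
      push_cast [this]; ring
    rw [hcast1, hcast2] at hB
    have hn2 : (0 : ℝ) < (n : ℝ) - 2 := by linarith
    have hn4 : (0 : ℝ) < (n : ℝ) - 2 - 2 := by linarith
    rw [gt_iff_lt, div_lt_div_iff₀ hn4 hn2] at hB
    have hA' : (1 : ℝ) / 2 < ((m : ℝ) - 1) / ((n : ℝ) - 2) := by
      have : ((4 : ℝ) - 2) = 2 := by norm_num
      calc (1 : ℝ) / 2 = ((2 : ℝ) - 1) / ((4 : ℝ) - 2) := by norm_num
        _ < _ := by push_cast at hA; exact hA
    rw [div_lt_div_iff₀ (by norm_num) hn2] at hA'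
    nlinarith

lemma mem_induceTop_edge (s : Set V) (x y : V) :
    s(x, y) ∈ ((⊤ : H.Subgraph).induce s).edgeSet ↔ x ∈ s ∧ y ∈ s ∧ H.Adj x y := by
  rw [SimpleGraph.Subgraph.mem_edgeSet]
  simp [SimpleGraph.Subgraph.induce_adj]

lemma edge_ncard_le_one {s : Set V} (hs : s.ncard ≤ 2) :
    ((⊤ : H.Subgraph).induce s).edgeSet.ncard ≤ 1 := by
  rw [Set.ncard_le_one (Set.toFinite _)]
  intro e he f hf
  obtain ⟨x, y, rfl, hxy⟩ := exists_rep (((⊤ : H.Subgraph).induce s).edgeSet_subset he)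
  obtain ⟨p, q, rfl, hpq⟩ := exists_rep (((⊤ : H.Subgraph).induce s).edgeSet_subset hf)
  rw [mem_induceTop_edge] at he hf
  have hseq : s = {x, y} := by
    refine (Set.eq_of_subset_of_ncard_le ?_ ?_ (Set.toFinite _)).symm
    · intro z hz; rcases hz with rfl | rfl
      exacts [he.1, he.2.1]
    · rw [Set.ncard_pair hxy.ne]; exact hs
  have hp : p = x ∨ p = y := by have := hf.1; rw [hseq] at this; simpa using this
  have hq : q = x ∨ q = y := by have := hf.2.1; rw [hseq] at this; simpa using this
  rcases hp with rfl | rfl <;> rcases hq with rfl | rfl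
  · exact absurd rfl hpq.ne
  · rfl
  · exact Sym2.eq_swap.symm
  · exact absurd rfl hpq.ne

lemma core (h2b : Strictly2Balanced H) (hn4 : 4 ≤ Fintype.card V)
    (A B S : Set V) (hA : A.Nonempty) (hB : B.Nonempty) (hS : S.ncard ≤ 1)
    (hdAB : Disjoint A B) (hdAS : Disjoint A S) (hdBS : Disjoint B S)
    (hcover : A ∪ B ∪ S = Set.univ)
    (hnoedge : ∀ a ∈ A, ∀ b ∈ B, ¬ H.Adj a b) : False := by
  have hm := mge h2b hn4
  obtain ⟨-, hm3, hK⟩ := h2b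
  set n := Fintype.card V with hn_def
  set m := H.edgeSet.ncard with hm_def
  set K1 : H.Subgraph := (⊤ : H.Subgraph).induce (A ∪ S) with hK1_def
  set K2 : H.Subgraph := (⊤ : H.Subgraph).induce (B ∪ S) with hK2_def
  have hKv1 : K1.verts = A ∪ S := by rw [hK1_def, SimpleGraph.Subgraph.induce_verts]
  have hKv2 : K2.verts = B ∪ S := by rw [hK2_def, SimpleGraph.Subgraph.induce_verts]
  set v1 := (A ∪ S).ncard with hv1_def
  set v2 := (B ∪ S).ncard with hv2_def
  set e1 := K1.edgeSet.ncard with he1_def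
  set e2 := K2.edgeSet.ncard with he2_def
  -- vertex count
  have hvsum : v1 + v2 = n + S.ncard := by
    have hu : (A ∪ S) ∪ (B ∪ S) = Set.univ := by
      rw [← hcover]; ext x; simp only [Set.mem_union]; tauto
    have hi : (A ∪ S) ∩ (B ∪ S) = S := by
      ext x
      simp only [Set.mem_inter_iff, Set.mem_union]
      constructor
      · rintro ⟨h1 | h1, h2 | h2⟩
        · exact absurd h2 (Set.disjoint_left.mp hdAB h1)
        · exact h2
        · exact h1
        · exact h1
      · tauto
    have := Set.ncard_union_add_ncard_inter (A ∪ S) (B ∪ S) (Set.toFinite _) (Set.toFinite _)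
    rw [hu, hi, ncard_univ_V] at this
    omega
  -- edge count
  have hesum : e1 + e2 = m := by
    have hu : K1.edgeSet ∪ K2.edgeSet = H.edgeSet := by
      apply Set.Subset.antisymm
      · exact Set.union_subset K1.edgeSet_subset K2.edgeSet_subset
      · intro e he
        obtain ⟨x, y, rfl, hxy⟩ := exists_rep he
        have hx : x ∈ A ∪ B ∪ S := hcover ▸ Set.mem_univ x
        have hy : y ∈ A ∪ B ∪ S := hcover ▸ Set.mem_univ y
        simp only [Set.mem_union] at hx hy
        rw [Set.mem_union, hK1_def, hK2_def, mem_induceTop_edge, mem_induceTop_edge]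
        simp only [Set.mem_union]
        rcases hx with (hx | hx) | hx <;> rcases hy with (hy | hy) | hy
        · exact Or.inl ⟨Or.inl hx, Or.inl hy, hxy⟩
        · exact absurd hxy (hnoedge _ hx _ hy)
        · exact Or.inl ⟨Or.inl hx, Or.inr hy, hxy⟩
        · exact absurd hxy.symm (hnoedge _ hy _ hx)
        · exact Or.inr ⟨Or.inl hx, Or.inl hy, hxy⟩
        · exact Or.inr ⟨Or.inl hx, Or.inr hy, hxy⟩
        · exact Or.inl ⟨Or.inr hx, Or.inl hy, hxy⟩
        · exact Or.inr ⟨Or.inr hx, Or.inl hy, hxy⟩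
        · exact Or.inl ⟨Or.inr hx, Or.inr hy, hxy⟩
    have hi : K1.edgeSet ∩ K2.edgeSet = ∅ := by
      ext e
      simp only [Set.mem_inter_iff, Set.mem_empty_iff_false, iff_false, not_and]
      intro h1 h2
      obtain ⟨x, y, rfl, hxy⟩ := exists_rep (K1.edgeSet_subset h1)
      rw [hK1_def, mem_induceTop_edge] at h1
      rw [hK2_def, mem_induceTop_edge] at h2
      have hxS : x ∈ S := by
        rcases h1.1 with h | h
        · rcases h2.1 with h' | h'
          · exact absurd h' (Set.disjoint_left.mp hdAB h)
          · exact h'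
        · exact h
      have hyS : y ∈ S := by
        rcases h1.2.1 with h | h
        · rcases h2.2.1 with h' | h'
          · exact absurd h' (Set.disjoint_left.mp hdAB h)
          · exact h'
        · exact h
      have : 1 < S.ncard := (Set.one_lt_ncard (Set.toFinite _)).mpr ⟨x, hxS, y, hyS, hxy.ne⟩
      omega
    have := Set.ncard_union_add_ncard_inter K1.edgeSet K2.edgeSet (Set.toFinite _) (Set.toFinite _)
    rw [hu, hi] at this
    simp only [Set.ncard_empty, add_zero] at this
    omega
  -- properness
  have hK1ne : K1 ≠ ⊤ := by
    intro h
    obtain ⟨b, hb⟩ := hB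
    have hbm : b ∈ A ∪ S := by
      have h' := congrArg SimpleGraph.Subgraph.verts h
      rw [hKv1, SimpleGraph.Subgraph.verts_top] at h'
      rw [h']; exact Set.mem_univ b
    rcases hbm with h' | h'
    · exact Set.disjoint_left.mp hdAB h' hb
    · exact Set.disjoint_left.mp hdBS hb h'
  have hK2ne : K2 ≠ ⊤ := by
    intro h
    obtain ⟨a, ha⟩ := hA
    have ham : a ∈ B ∪ S := by
      have h' := congrArg SimpleGraph.Subgraph.verts h
      rw [hKv2, SimpleGraph.Subgraph.verts_top] at h'
      rw [h']; exact Set.mem_univ a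
    rcases ham with h' | h'
    · exact Set.disjoint_left.mp hdAB ha h'
    · exact Set.disjoint_left.mp hdAS ha h'
  -- upper bounds on v1 v2
  have hv1le : v1 ≤ n - 1 := by
    obtain ⟨b0, hb0⟩ := hB
    have hsub : A ∪ S ⊆ Set.univ \ {b0} := by
      intro x hx
      refine ⟨Set.mem_univ x, ?_⟩
      simp only [Set.mem_singleton_iff]
      rintro rfl
      rcases hx with h | h
      · exact Set.disjoint_left.mp hdAB h hb0
      · exact Set.disjoint_left.mp hdBS hb0 h
    have h' := Set.ncard_le_ncard hsub (Set.toFinite _)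
    rwa [Set.ncard_diff (Set.subset_univ _), ncard_univ_V, Set.ncard_singleton] at h'
  have hv2le : v2 ≤ n - 1 := by
    obtain ⟨a0, ha0⟩ := hA
    have hsub : B ∪ S ⊆ Set.univ \ {a0} := by
      intro x hx
      refine ⟨Set.mem_univ x, ?_⟩
      simp only [Set.mem_singleton_iff]
      rintro rfl
      rcases hx with h | h
      · exact Set.disjoint_left.mp hdAB ha0 h
      · exact Set.disjoint_left.mp hdAS ha0 h
    have h' := Set.ncard_le_ncard hsub (Set.toFinite _)
    rwa [Set.ncard_diff (Set.subset_univ _), ncard_univ_V, Set.ncard_singleton] at h'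
  -- real facts
  have hnr : (4 : ℝ) ≤ (n : ℝ) := by exact_mod_cast hn4
  have hmr : (n : ℝ) ≤ (m : ℝ) := by exact_mod_cast hm
  have hsr : (S.ncard : ℝ) ≤ 1 := by exact_mod_cast hS
  have hsr0 : (0 : ℝ) ≤ (S.ncard : ℝ) := by positivity
  have hvsumr : (v1 : ℝ) + (v2 : ℝ) = (n : ℝ) + (S.ncard : ℝ) := by exact_mod_cast hvsum
  have hesumr : (e1 : ℝ) + (e2 : ℝ) = (m : ℝ) := by exact_mod_cast hesum
  have hn2 : (0 : ℝ) < (n : ℝ) - 2 := by linarith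
  by_cases h1 : 3 ≤ v1 <;> by_cases h2 : 3 ≤ v2
  · -- both big
    have hP1 := hK K1 hK1ne (by rw [hKv1]; exact h1)
    have hP2 := hK K2 hK2ne (by rw [hKv2]; exact h2)
    rw [hKv1] at hP1
    rw [hKv2] at hP2
    have hv12 : (0 : ℝ) < (v1 : ℝ) - 2 := by
      have : (3 : ℝ) ≤ (v1 : ℝ) := by exact_mod_cast h1
      linarith
    have hv22 : (0 : ℝ) < (v2 : ℝ) - 2 := by
      have : (3 : ℝ) ≤ (v2 : ℝ) := by exact_mod_cast h2
      linarith
    rw [gt_iff_lt, div_lt_div_iff₀ hv12 hn2] at hP1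
    rw [gt_iff_lt, div_lt_div_iff₀ hv22 hn2] at hP2
    nlinarith [mul_nonneg (show (0 : ℝ) ≤ (m : ℝ) - 1 by linarith)
      (show (0 : ℝ) ≤ 1 - (S.ncard : ℝ) by linarith)]
  · -- v1 big, v2 small : use K1
    have he2le : e2 ≤ 1 := by
      rw [he2_def, hK2_def]
      exact edge_ncard_le_one (by omega)
    have hP1 := hK K1 hK1ne (by rw [hKv1]; exact h1)
    rw [hKv1] at hP1
    have hv12 : (0 : ℝ) < (v1 : ℝ) - 2 := by
      have : (3 : ℝ) ≤ (v1 : ℝ) := by exact_mod_cast h1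
      linarith
    rw [gt_iff_lt, div_lt_div_iff₀ hv12 hn2] at hP1
    have hv1r : (v1 : ℝ) ≤ (n : ℝ) - 1 := by
      have : v1 + 1 ≤ n := by omega
      have := (Nat.cast_le (α := ℝ)).mpr this
      push_cast at this
      linarith
    have he2r : (e2 : ℝ) ≤ 1 := by exact_mod_cast he2le
    nlinarith [mul_nonneg (show (0 : ℝ) ≤ (m : ℝ) - 1 by linarith)
        (show (0 : ℝ) ≤ (n : ℝ) - 1 - (v1 : ℝ) by linarith),
      mul_nonneg (show (0 : ℝ) ≤ (e1 : ℝ) - ((m : ℝ) - 1) by linarith)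
        (show (0 : ℝ) ≤ (n : ℝ) - 2 by linarith)]
  · -- v1 small, v2 big : use K2
    have he1le : e1 ≤ 1 := by
      rw [he1_def, hK1_def]
      exact edge_ncard_le_one (by omega)
    have hP2 := hK K2 hK2ne (by rw [hKv2]; exact h2)
    rw [hKv2] at hP2
    have hv22 : (0 : ℝ) < (v2 : ℝ) - 2 := by
      have : (3 : ℝ) ≤ (v2 : ℝ) := by exact_mod_cast h2
      linarith
    rw [gt_iff_lt, div_lt_div_iff₀ hv22 hn2] at hP2
    have hv2r : (v2 : ℝ) ≤ (n : ℝ) - 1 := by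
      have : v2 + 1 ≤ n := by omega
      have := (Nat.cast_le (α := ℝ)).mpr this
      push_cast at this
      linarith
    have he1r : (e1 : ℝ) ≤ 1 := by exact_mod_cast he1le
    nlinarith [mul_nonneg (show (0 : ℝ) ≤ (m : ℝ) - 1 by linarith)
        (show (0 : ℝ) ≤ (n : ℝ) - 1 - (v2 : ℝ) by linarith),
      mul_nonneg (show (0 : ℝ) ≤ (e2 : ℝ) - ((m : ℝ) - 1) by linarith)
        (show (0 : ℝ) ≤ (n : ℝ) - 2 by linarith)]
  · -- both small
    have he1le : e1 ≤ 1 := by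
      rw [he1_def, hK1_def]
      exact edge_ncard_le_one (by omega)
    have he2le : e2 ≤ 1 := by
      rw [he2_def, hK2_def]
      exact edge_ncard_le_one (by omega)
    omega

lemma top_three (hn : Fintype.card V = 3) (hm : 3 ≤ H.edgeSet.ncard) :
    ∀ x y : V, x ≠ y → H.Adj x y := by
  classical
  by_contra hc
  push_neg at hc
  obtain ⟨x, y, hxy, hnadj⟩ := hc
  have htopcard : ((⊤ : SimpleGraph V).edgeSet).ncard = 3 := by
    rw [Set.ncard_eq_toFinset_card']
    have : (⊤ : SimpleGraph V).edgeSet.toFinset = (⊤ : SimpleGraph V).edgeFinset := rfl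
    rw [this, SimpleGraph.card_edgeFinset_top_eq_card_choose_two, hn]
    rfl
  have hmem : s(x, y) ∈ (⊤ : SimpleGraph V).edgeSet := by
    rw [SimpleGraph.mem_edgeSet]
    exact hxy
  have hsub : H.edgeSet ⊆ (⊤ : SimpleGraph V).edgeSet \ {s(x, y)} := by
    intro e he
    refine ⟨SimpleGraph.edgeSet_mono le_top he, ?_⟩
    simp only [Set.mem_singleton_iff]
    rintro rfl
    exact hnadj ((SimpleGraph.mem_edgeSet H).mp he)
  have h2 := Set.ncard_le_ncard hsub (Set.toFinite _)
  rw [Set.ncard_diff_singleton_of_mem hmem, htopcard] at h2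
  omega

lemma not_conn_exists' {W : Type*} (G : SimpleGraph W) (hc : ¬ G.Connected)
    (hne : Nonempty W) : ∃ u w, ¬ G.Reachable u w := by
  rw [SimpleGraph.connected_iff] at hc
  push_neg at hc
  have h1 : ¬ G.Preconnected := fun h => (hc h).false hne.some
  unfold SimpleGraph.Preconnected at h1
  push_neg at h1
  exact h1

end Aux

/-- Every strictly 2-balanced graph is 2-connected: it has at least 3 vertices,
is connected, and remains connected after deleting any single vertex. -/
theorem stmt_2 {V : Type*} [Fintype V] (H : SimpleGraph V)
    (h2b : Strictly2Balanced H) :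
    3 ≤ Fintype.card V ∧ H.Connected ∧
      ∀ v : V, (H.induce {u : V | u ≠ v}).Connected := by
  have hn3 := h2b.1
  have hm3 := h2b.2.1
  have hVne : Nonempty V := Fintype.card_pos_iff.mp (by omega)
  have hVnt : Nontrivial V := Fintype.one_lt_card_iff_nontrivial.mp (by omega)
  by_cases hn : 4 ≤ Fintype.card V
  · -- main case via core'
    refine ⟨hn3, ?_, ?_⟩
    · by_contra hc
      obtain ⟨u, w, hr⟩ := not_conn_exists' H hc hVne
      refine core h2b hn {x | H.Reachable u x} {x | H.Reachable u x}ᶜ ∅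
        ⟨u, Reachable.refl u⟩ ⟨w, hr⟩ (by simp) disjoint_compl_right
        (Set.disjoint_empty _) (Set.disjoint_empty _) (by simp) ?_
      intro a ha b hb hadj
      exact hb (ha.trans hadj.reachable)
    · intro v
      by_contra hc
      have hsne : Nonempty {u : V | u ≠ v} := by
        obtain ⟨u, hu⟩ := exists_ne v
        exact ⟨⟨u, hu⟩⟩
      obtain ⟨x, y, hxy⟩ := not_conn_exists' _ hc hsne
      set A : Set V := {z : V | ∃ h : z ≠ v, (H.induce {u : V | u ≠ v}).Reachable x ⟨z, h⟩}
        with hA_def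
      set B : Set V := {z : V | z ≠ v ∧ z ∉ A} with hB_def
      refine core h2b hn A B {v} ⟨x.1, x.2, by rw [Subtype.coe_eta]⟩
        ⟨y.1, y.2, fun hy => ?_⟩ (by simp) ?_ ?_ ?_ ?_ ?_
      · obtain ⟨h, hr⟩ := hy
        rw [Subtype.coe_eta] at hr
        exact hxy hr
      · rw [Set.disjoint_left]
        intro z hz hz'
        exact hz'.2 hz
      · rw [Set.disjoint_left]
        intro z hz hz'
        rw [Set.mem_singleton_iff] at hz'
        exact hz.1 hz'
      · rw [Set.disjoint_left]
        intro z hz hz'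
        rw [Set.mem_singleton_iff] at hz'
        exact hz.1 hz'
      · ext z
        simp only [Set.mem_union, Set.mem_singleton_iff, Set.mem_univ, iff_true]
        by_cases hzv : z = v
        · exact Or.inr hzv
        · by_cases hzA : z ∈ A
          · exact Or.inl (Or.inl hzA)
          · exact Or.inl (Or.inr ⟨hzv, hzA⟩)
      · rintro a ⟨ha, hra⟩ b ⟨hb, hnb⟩ hadj
        refine hnb ⟨hb, hra.trans (Adj.reachable ?_)⟩
        simp only [SimpleGraph.comap_adj, Function.Embedding.coe_subtype]
        exact hadj
  · -- card = 3
    have hcard : Fintype.card V = 3 := by omega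
    have hcomp := top_three hcard hm3
    refine ⟨hn3, ?_, ?_⟩
    · rw [SimpleGraph.connected_iff]
      refine ⟨fun a b => ?_, hVne⟩
      by_cases h : a = b
      · subst h; exact Reachable.refl a
      · exact (hcomp a b h).reachable
    · intro v
      rw [SimpleGraph.connected_iff]
      constructor
      · intro a b
        by_cases h : a = b
        · subst h; exact Reachable.refl a
        · refine Adj.reachable ?_
          have : H.Adj a b := hcomp a b (fun he => h (Subtype.ext he))
          simp only [SimpleGraph.comap_adj, Function.Embedding.coe_subtype]
          exact this
      · obtain ⟨u, hu⟩ := exists_ne v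
        exact ⟨⟨u, hu⟩⟩
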